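/- Let s_1, …, s_K: 𝒳 → ℝ be fixed measurable scores and costs c_k(λ) = (w_k + λ_k)/π_k affine increasing in λ_k ∈ [0,∞). For t ∈ (0,1], set λ_k(t) = t λ_k^{(0)} + (t−1) w_k for all k ∈ 𝒜 (so that w_k + λ_k(t) = t(w_k + λ_k^{(0)})), and keep c_j fixed for j ∉ 𝒜. Let φ_t(x) = argmax_k c_k(λ(t)) s_k(x). Then for each k ∈ 𝒜, the correct-classification region {x : φ_t(x) = k} is monotone nondecreasing in t; equivalently, the error R_k(φ_t) = P(φ_t(X) ≠ k | Y=k) is nonincreasing in t, for t ∈ [max_{k∈𝒜} w_k(w_k + λ_k^{(0)})^{−1}, 1]. -/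
import Mathlib


open MeasureTheory Set

/-- Monotonicity of correct-classification regions under the common cost scaling
`c_k(t) = t(w_k+λ⁰_k)/π_k` for `k ∈ 𝒜` (costs of `k ∉ 𝒜` fixed): for the lexicographic
argmax classifier `φ_t`, the region `{x : φ_t(x) = k}` is nondecreasing in `t` for each
`k ∈ 𝒜`, hence the error `R_k(φ_t) = P(φ_t(X) ≠ k | Y=k)` is nonincreasing in `t`. -/
theorem stmt14
    {𝒳 : Type*} [MeasurableSpace 𝒳] {K : ℕ}
    (A : Finset (Fin K)) (s : 𝒳 → Fin K → ℝ) (hs : ∀ x k, 0 ≤ s x k)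
    (π w lam0 : Fin K → ℝ) (hπ : ∀ k, 0 < π k) (hw : ∀ k, 0 ≤ w k)
    (hlam0 : ∀ k, 0 ≤ lam0 k)
    (c : Fin K → ℝ → ℝ)
    (hcdef : ∀ k t, c k t = if k ∈ A then t * (w k + lam0 k) / π k else w k / π k)
    (φ : ℝ → 𝒳 → Fin K)
    (hargmax : ∀ t x j, c j t * s x j ≤ c (φ t x) t * s x (φ t x))
    (htie : ∀ t x j, c j t * s x j = c (φ t x) t * s x (φ t x) → φ t x ≤ j)
    (t₁ t₂ : ℝ) (ht₁pos : 0 < t₁)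
    (hrange : ∀ k ∈ A, w k / (w k + lam0 k) ≤ t₁)
    (h12 : t₁ ≤ t₂) (ht₂ : t₂ ≤ 1)
    (ν : Fin K → Measure 𝒳) (hν : ∀ k, IsProbabilityMeasure (ν k)) :
    ∀ k ∈ A, ({x | φ t₁ x = k} ⊆ {x | φ t₂ x = k})
      ∧ (ν k {x | φ t₂ x ≠ k}).toReal ≤ (ν k {x | φ t₁ x ≠ k}).toReal := by
  intro k hk
  have ht₂pos : 0 < t₂ := lt_of_lt_of_le ht₁pos h12
  have key : ∀ x, φ t₁ x = k → φ t₂ x = k := by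
    intro x h1
    have hvk : 0 ≤ (w k + lam0 k) / π k * s x k :=
      mul_nonneg (div_nonneg (by linarith [hw k, hlam0 k]) (hπ k).le) (hs x k)
    have claim : ∀ j, c j t₂ * s x j ≤ c k t₂ * s x k ∧
        (c j t₂ * s x j = c k t₂ * s x k → c j t₁ * s x j = c k t₁ * s x k) := by
      intro j
      have hmax1 : c j t₁ * s x j ≤ c k t₁ * s x k := by rw [← h1]; exact hargmax t₁ x j
      by_cases hj : j ∈ A
      · simp only [hcdef, hj, hk, if_true] at hmax1 ⊢
        set u := (w j + lam0 j) / π j * s x j with hu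
        set v := (w k + lam0 k) / π k * s x k with hv
        have h1' : t₁ * u ≤ t₁ * v := by
          calc t₁ * u = t₁ * (w j + lam0 j) / π j * s x j := by ring
          _ ≤ t₁ * (w k + lam0 k) / π k * s x k := hmax1
          _ = t₁ * v := by ring
        have huv : u ≤ v := le_of_mul_le_mul_left h1' ht₁pos
        constructor
        · calc t₂ * (w j + lam0 j) / π j * s x j = t₂ * u := by ring
          _ ≤ t₂ * v := by nlinarith
          _ = t₂ * (w k + lam0 k) / π k * s x k := by ring
        · intro heq
          have h2' : t₂ * u = t₂ * v := by
            calc t₂ * u = t₂ * (w j + lam0 j) / π j * s x j := by ring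
            _ = t₂ * (w k + lam0 k) / π k * s x k := heq
            _ = t₂ * v := by ring
          have : u = v := mul_left_cancel₀ (ne_of_gt ht₂pos) h2'
          calc t₁ * (w j + lam0 j) / π j * s x j = t₁ * u := by ring
          _ = t₁ * v := by rw [this]
          _ = t₁ * (w k + lam0 k) / π k * s x k := by ring
      · simp only [hcdef, hj, hk, if_true, if_false] at hmax1 ⊢
        set b := w j / π j * s x j with hb
        set v := (w k + lam0 k) / π k * s x k with hv
        have hmax1' : b ≤ t₁ * v := by
          calc b ≤ t₁ * (w k + lam0 k) / π k * s x k := hmax1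
          _ = t₁ * v := by ring
        have h2 : b ≤ t₂ * v := by nlinarith
        refine ⟨by linarith [h2, (by ring : t₂ * (w k + lam0 k) / π k * s x k = t₂ * v)], ?_⟩
        intro heq
        have heq' : b = t₂ * v := by
          calc b = t₂ * (w k + lam0 k) / π k * s x k := heq
          _ = t₂ * v := by ring
        have : b = t₁ * v := by nlinarith
        calc b = t₁ * v := this
        _ = t₁ * (w k + lam0 k) / π k * s x k := by ring
    have h2 := hargmax t₂ x k
    have h3 := (claim (φ t₂ x)).1
    have heq : c (φ t₂ x) t₂ * s x (φ t₂ x) = c k t₂ * s x k := le_antisymm h3 h2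
    have hle1 : φ t₂ x ≤ k := htie t₂ x k heq.symm
    have heq1 : c (φ t₂ x) t₁ * s x (φ t₂ x) = c k t₁ * s x k := (claim _).2 heq
    have hge : k ≤ φ t₂ x := by
      have := htie t₁ x (φ t₂ x) (by rw [heq1, h1])
      rwa [h1] at this
    exact le_antisymm hle1 hge
  refine ⟨fun x hx => key x hx, ?_⟩
  have hsub : {x | φ t₂ x ≠ k} ⊆ {x | φ t₁ x ≠ k} := fun x hx h => hx (key x h)
  haveI := hν k
  exact ENNReal.toReal_mono (measure_ne_top _ _) (measure_mono hsub)
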